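/- Let r ≥ 2, c ≥ 1 and m ≥ c·r·(1 + ln r). Then (1 - r·(e·r)^(-c))·(r^m / r!) < S(m,r) < r^m / r!. -/

import Mathlib

/-- Stirling number of the second kind: number of partitions of an `n`-set into
`k` nonempty blocks. -/
def stirling : ℕ → ℕ → ℕ
  | 0, 0 => 1
  | 0, _ + 1 => 0
  | _ + 1, 0 => 0
  | n + 1, k + 1 => stirling n k + (k + 1) * stirling n (k + 1)

lemma stirling_one (m : ℕ) : stirling (m+1) 1 = 1 := by
  induction m with
  | zero => rfl
  | succ n ih =>
    have : stirling (n+1+1) 1 = stirling (n+1) 0 + 1 * stirling (n+1) 1 := rfl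
    rw [this, ih]
    rfl

lemma stirling_identity (m : ℕ) : ∀ r : ℕ,
    ∑ j ∈ Finset.range (r+1), r.choose j * (j.factorial * stirling m j) = r ^ m := by
  induction m with
  | zero =>
    intro r
    rw [Finset.sum_range_succ']
    simp [stirling]
  | succ m ih =>
    intro r
    rw [Finset.sum_range_succ']
    have f0 : r.choose 0 * (Nat.factorial 0 * stirling (m+1) 0) = 0 := by simp [stirling]
    rw [f0, add_zero]
    have key : ∀ j ∈ Finset.range r,
        r.choose (j+1) * ((j+1).factorial * stirling (m+1) (j+1))
          = (r - j) * (r.choose j * (j.factorial * stirling m j))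
            + (j+1) * (r.choose (j+1) * ((j+1).factorial * stirling m (j+1))) := by
      intro j hj
      have hst : stirling (m+1) (j+1) = stirling m j + (j+1) * stirling m (j+1) := rfl
      have h := Nat.choose_succ_right_eq r j
      calc r.choose (j+1) * ((j+1).factorial * stirling (m+1) (j+1))
          = (r.choose (j+1) * (j+1)) * (j.factorial * stirling m j)
            + (j+1) * (r.choose (j+1) * ((j+1).factorial * stirling m (j+1))) := by
            rw [hst, Nat.factorial_succ]; ring
        _ = _ := by rw [h]; ring
    rw [Finset.sum_congr rfl key, Finset.sum_add_distrib]
    have hA : ∑ j ∈ Finset.range r,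
        (j+1) * (r.choose (j+1) * ((j+1).factorial * stirling m (j+1)))
        = ∑ j ∈ Finset.range (r+1), j * (r.choose j * (j.factorial * stirling m j)) := by
      rw [Finset.sum_range_succ']; simp
    have hB : ∑ j ∈ Finset.range r, (r - j) * (r.choose j * (j.factorial * stirling m j))
        = ∑ j ∈ Finset.range (r+1), (r - j) * (r.choose j * (j.factorial * stirling m j)) := by
      rw [Finset.sum_range_succ]; simp
    rw [hA, hB, ← Finset.sum_add_distrib]
    have : ∀ j ∈ Finset.range (r+1),
        (r - j) * (r.choose j * (j.factorial * stirling m j))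
          + j * (r.choose j * (j.factorial * stirling m j))
        = r * (r.choose j * (j.factorial * stirling m j)) := by
      intro j hj
      rw [Finset.mem_range] at hj
      rw [← add_mul]
      congr 1
      omega
    rw [Finset.sum_congr rfl this, ← Finset.mul_sum, ih, pow_succ]
    ring

lemma stirling_upper (m r : ℕ) (hm : 1 ≤ m) (hr : 2 ≤ r) :
    r.factorial * stirling m r + r ≤ r ^ m := by
  obtain ⟨m', rfl⟩ := Nat.exists_eq_add_of_le hm
  rw [← stirling_identity (1 + m') r]
  have hsub : ({1, r} : Finset ℕ) ⊆ Finset.range (r+1) := by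
    intro x hx
    simp only [Finset.mem_insert, Finset.mem_singleton] at hx
    rw [Finset.mem_range]; omega
  calc r.factorial * stirling (1 + m') r + r
      = ∑ j ∈ ({1, r} : Finset ℕ), r.choose j * (j.factorial * stirling (1 + m') j) := by
        rw [Finset.sum_pair (by omega : (1:ℕ) ≠ r)]
        have h1 : stirling (1 + m') 1 = 1 := by rw [Nat.add_comm]; exact stirling_one m'
        simp [h1, Nat.choose_self, Nat.choose_one_right]
        ring
    _ ≤ _ := Finset.sum_le_sum_of_subset hsub

lemma stirling_lower (m r : ℕ) (hr : 1 ≤ r) :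
    r ^ m ≤ r.factorial * stirling m r + r * (r-1) ^ m := by
  rw [← stirling_identity m r, Finset.sum_range_succ, Nat.choose_self, one_mul]
  rw [add_comm]
  apply add_le_add_right
  calc ∑ j ∈ Finset.range r, r.choose j * (j.factorial * stirling m j)
      ≤ ∑ j ∈ Finset.range r, (r - j) * (r.choose j * (j.factorial * stirling m j)) := by
        apply Finset.sum_le_sum
        intro j hj
        rw [Finset.mem_range] at hj
        have h1 : 1 ≤ r - j := by omega
        calc r.choose j * (j.factorial * stirling m j)
            = 1 * (r.choose j * (j.factorial * stirling m j)) := (one_mul _).symm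
          _ ≤ _ := Nat.mul_le_mul_right _ h1
    _ = ∑ j ∈ Finset.range r, r * ((r-1).choose j * (j.factorial * stirling m j)) := by
        apply Finset.sum_congr rfl
        intro j hj
        have h1 : r * (r-1).choose j = r.choose j * (r - j) := by
          have h2 := Nat.add_one_mul_choose_eq (r-1) j
          have h3 : r - 1 + 1 = r := by omega
          rw [h3] at h2
          rw [h2, Nat.choose_succ_right_eq]
        calc (r - j) * (r.choose j * (j.factorial * stirling m j))
            = (r.choose j * (r - j)) * (j.factorial * stirling m j) := by ring
          _ = (r * (r-1).choose j) * (j.factorial * stirling m j) := by rw [h1]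
          _ = _ := by ring
    _ = r * ∑ j ∈ Finset.range ((r-1)+1), (r-1).choose j * (j.factorial * stirling m j) := by
        have h4 : (r-1)+1 = r := by omega
        rw [← Finset.mul_sum, h4]
    _ = r * (r-1) ^ m := by rw [stirling_identity]

theorem stmt_5 (r m : ℕ) (c : ℝ) (hr : 2 ≤ r) (hc : 1 ≤ c)
    (hm : (m : ℝ) ≥ c * r * (1 + Real.log r)) :
    (1 - (r : ℝ) * (Real.exp 1 * r) ^ (-c)) * ((r : ℝ) ^ m / (Nat.factorial r)) <
        (stirling m r : ℝ) ∧
      (stirling m r : ℝ) < (r : ℝ) ^ m / (Nat.factorial r) := by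
  have hr2 : (2:ℝ) ≤ (r:ℝ) := by exact_mod_cast hr
  have hr0 : (0:ℝ) < r := by linarith
  have hlogr : 0 ≤ Real.log r := Real.log_nonneg (by linarith)
  have hm2 : (2:ℝ) ≤ (m:ℝ) := by
    have hcr : (2:ℝ) ≤ c * r := by nlinarith
    nlinarith [mul_nonneg (by linarith : (0:ℝ) ≤ c * r) hlogr]
  have hm1 : 1 ≤ m := by exact_mod_cast le_trans one_le_two hm2
  have hfac : (0:ℝ) < (r.factorial : ℝ) := by exact_mod_cast r.factorial_pos
  -- key analytic inequality
  have hx : -(1/(r:ℝ)) ≠ 0 := by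
    have : (1:ℝ)/r > 0 := by positivity
    linarith
  have h1 : (r:ℝ) - 1 < r * Real.exp (-(1/r)) := by
    have he := Real.add_one_lt_exp hx
    have hr0' : (r:ℝ) ≠ 0 := ne_of_gt hr0
    have : (r:ℝ) * (-(1/r) + 1) < r * Real.exp (-(1/r)) :=
      mul_lt_mul_of_pos_left he hr0
    calc (r:ℝ) - 1 = r * (-(1/r) + 1) := by field_simp; ring
      _ < _ := this
  have hpow : ((r:ℝ)-1)^m < ((r:ℝ) * Real.exp (-(1/r)))^m := by
    apply pow_lt_pow_left₀ h1 (by linarith) (by omega)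
  have hexp : ((r:ℝ) * Real.exp (-(1/r)))^m = (r:ℝ)^m * Real.exp ((m:ℝ) * (-(1/r))) := by
    rw [mul_pow, ← Real.exp_nat_mul]
  have hmono : Real.exp ((m:ℝ) * (-(1/r))) ≤ Real.exp (Real.log (Real.exp 1 * r) * (-c)) := by
    apply Real.exp_le_exp.mpr
    rw [Real.log_mul (Real.exp_ne_zero 1) (ne_of_gt hr0), Real.log_exp]
    have h9 : c * (1 + Real.log r) ≤ (m:ℝ) * (1/r) := by
      rw [mul_one_div, le_div_iff₀ hr0]
      nlinarith
    nlinarith [h9]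
  have hrpow : (Real.exp 1 * (r:ℝ)) ^ (-c) = Real.exp (Real.log (Real.exp 1 * r) * (-c)) := by
    rw [Real.rpow_def_of_pos (by positivity)]
  have hkey : ((r:ℝ)-1)^m < (Real.exp 1 * (r:ℝ)) ^ (-c) * (r:ℝ)^m := by
    rw [hrpow]
    calc ((r:ℝ)-1)^m < (r:ℝ)^m * Real.exp ((m:ℝ) * (-(1/r))) := by rw [← hexp]; exact hpow
      _ ≤ (r:ℝ)^m * Real.exp (Real.log (Real.exp 1 * r) * (-c)) := by
          apply mul_le_mul_of_nonneg_left hmono (by positivity)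
      _ = _ := by ring
  -- cast the nat inequalities
  have hup : (r.factorial : ℝ) * (stirling m r : ℝ) + r ≤ (r:ℝ)^m := by
    have := stirling_upper m r hm1 hr
    exact_mod_cast this
  have hlo : (r:ℝ)^m ≤ (r.factorial : ℝ) * (stirling m r : ℝ) + (r:ℝ) * ((r:ℝ)-1)^m := by
    have h6 := stirling_lower m r (by omega)
    have h7 : ((r - 1 : ℕ) : ℝ) = (r:ℝ) - 1 := by
      have : 1 ≤ r := by omega
      push_cast [this]
      ring
    calc (r:ℝ)^m ≤ ((r.factorial * stirling m r + r * (r-1)^m : ℕ) : ℝ) := by exact_mod_cast h6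
      _ = (r.factorial : ℝ) * (stirling m r : ℝ) + (r:ℝ) * ((r:ℝ)-1)^m := by
          push_cast [h7]; ring
  constructor
  · rw [mul_div_assoc', div_lt_iff₀ hfac]
    have h8 : (r:ℝ) * ((r:ℝ)-1)^m < (r:ℝ) * ((Real.exp 1 * (r:ℝ)) ^ (-c) * (r:ℝ)^m) :=
      mul_lt_mul_of_pos_left hkey hr0
    nlinarith
  · rw [lt_div_iff₀ hfac]
    nlinarith
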